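/- Existence of least common co-multiples up to w: let k ≥ 1, u : Fin k → S and w ∈ S with w ∈ S·(u i) for every i. Then there exists z ∈ S such that: (a) w ∈ S·z; (b) z ∈ S·(u i) for every i; and (c) whenever v ∈ S satisfies w ∈ S·v and v ∈ S·(u i) for every i, one has v ∈ S·z. -/
import Mathlib


open scoped BigOperators

/-- `u` divides `w` in `S`: `w ∈ u·S`. -/
def SDvd {G : Type*} [Group G] (S : Submonoid G) (u w : G) : Prop := ∃ s ∈ S, w = u * s

/-- The left set `u·S = {u * s : s ∈ S}`. -/
def leftSet {G : Type*} [Group G] (S : Submonoid G) (u : G) : Set G := {w | ∃ s ∈ S, w = u * s}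

/-- `τ(u)`: the number of ordered factorizations `u = v * w` with `v, w ∈ S`. -/
noncomputable def tau {G : Type*} [Group G] (S : Submonoid G) (u : G) : ℕ :=
  Set.ncard {p : G × G | p.1 ∈ S ∧ p.2 ∈ S ∧ p.1 * p.2 = u}

/-- An integral monoid: a submonoid of a group satisfying Axioms I, II, III. -/
structure IntegralMonoid {G : Type*} [Group G] (S : Submonoid G) : Prop where
  ax1 : ∀ u ∈ S, u⁻¹ ∈ S → u = 1
  ax2 : ∀ u : G, ∃ x ∈ S, ∃ y ∈ S, u = x * y⁻¹ ∧
        ∀ z ∈ S, ∀ w ∈ S, u = z * w⁻¹ → ∃ c ∈ S, z = x * c ∧ w = y * c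
  ax3 : ∀ u ∈ S, {p : G × G | p.1 ∈ S ∧ p.2 ∈ S ∧ p.1 * p.2 = u}.Finite

theorem lcm_codvd_exists {G : Type*} [Group G] (S : Submonoid G) (hS : IntegralMonoid S)
    (k : ℕ) (hk : 1 ≤ k) (u : Fin k → G) (hu : ∀ i, u i ∈ S)
    (w : G) (hw : w ∈ S) (hwu : ∀ i, ∃ s ∈ S, w = s * u i) :
    ∃ z ∈ S, (∃ s ∈ S, w = s * z) ∧ (∀ i, ∃ s ∈ S, z = s * u i) ∧
      ∀ v ∈ S, (∃ s ∈ S, w = s * v) → (∀ i, ∃ s ∈ S, v = s * u i) →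
        ∃ s ∈ S, v = s * z := by
  classical
  -- P z : z is a common co-multiple of the u i that right-divides w
  set P : G → Prop := fun z => z ∈ S ∧ (∃ s ∈ S, w = s * z) ∧ ∀ i, ∃ s ∈ S, z = s * u i
    with hP
  have hPw : P w := ⟨hw, ⟨1, one_mem S, (one_mul w).symm⟩, hwu⟩
  -- τ strictly decreases when passing to a proper right-divisor
  have tau_lt : ∀ c x : G, c ∈ S → x ∈ S → x ≠ 1 → tau S c < tau S (x * c) := by
    intro c x hc hx hx1
    have hzS : x * c ∈ S := S.mul_mem hx hc
    have hBfin := hS.ax3 (x * c) hzS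
    have hinj : Function.Injective (fun p : G × G => (x * p.1, p.2)) := by
      rintro ⟨a, b⟩ ⟨a', b'⟩ h
      simp only [Prod.mk.injEq] at h
      exact Prod.ext (mul_left_cancel h.1) h.2
    have hss : (fun p : G × G => (x * p.1, p.2)) ''
        {p : G × G | p.1 ∈ S ∧ p.2 ∈ S ∧ p.1 * p.2 = c} ⊂
        {p : G × G | p.1 ∈ S ∧ p.2 ∈ S ∧ p.1 * p.2 = x * c} := by
      constructor
      · rintro ⟨a, b⟩ ⟨⟨a', b'⟩, ⟨ha', hb', hab'⟩, heq⟩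
        simp only [Prod.mk.injEq] at heq
        refine ⟨?_, ?_, ?_⟩
        · rw [← heq.1]; exact S.mul_mem hx ha'
        · rw [← heq.2]; exact hb'
        · rw [← heq.1, ← heq.2, mul_assoc, hab']
      · intro hsub
        have h1 : ((1 : G), x * c) ∈
            {p : G × G | p.1 ∈ S ∧ p.2 ∈ S ∧ p.1 * p.2 = x * c} := by
          exact ⟨one_mem S, hzS, one_mul _⟩
        obtain ⟨⟨a', b'⟩, ⟨ha', hb', hab'⟩, heq⟩ := hsub h1
        simp only [Prod.mk.injEq] at heq
        have hainv : a' = x⁻¹ := by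
          rw [← one_mul a', ← inv_mul_cancel x, mul_assoc, heq.1, mul_one]
        have hxinv : x⁻¹ ∈ S := hainv ▸ ha'
        exact hx1 (hS.ax1 x hx hxinv)
    calc tau S c
        = ((fun p : G × G => (x * p.1, p.2)) ''
            {p : G × G | p.1 ∈ S ∧ p.2 ∈ S ∧ p.1 * p.2 = c}).ncard :=
          (Set.ncard_image_of_injective _ hinj).symm
      _ < tau S (x * c) := Set.ncard_lt_ncard hss hBfin
  -- binary meets exist in P
  have meet : ∀ z1 z2, P z1 → P z2 →
      ∃ c, P c ∧ ∃ x ∈ S, z1 = x * c ∧ ∃ y ∈ S, z2 = y * c := by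
    rintro z1 z2 ⟨hz1, ⟨s1, hs1, hws1⟩, hu1⟩ ⟨hz2, ⟨s2, hs2, hws2⟩, hu2⟩
    obtain ⟨x, hx, y, hy, hxy, huniv⟩ := hS.ax2 (z1 * z2⁻¹)
    obtain ⟨c, hc, hzc1, hzc2⟩ := huniv z1 hz1 z2 hz2 rfl
    refine ⟨c, ⟨hc, ⟨s1 * x, S.mul_mem hs1 hx, by rw [hws1, hzc1, mul_assoc]⟩, ?_⟩,
      x, hx, hzc1, y, hy, hzc2⟩
    intro i
    obtain ⟨a, ha, hza⟩ := hu1 i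
    obtain ⟨b, hb, hzb⟩ := hu2 i
    have hab : z1 * z2⁻¹ = a * b⁻¹ := by rw [hza, hzb]; group
    obtain ⟨d, hd, had, hbd⟩ := huniv a ha b hb hab
    refine ⟨d, hd, ?_⟩
    have hxc : x * c = x * (d * u i) := by
      rw [← hzc1, hza, had, mul_assoc]
    exact mul_left_cancel hxc
  -- pick z in P with minimal τ
  have hQ : ∃ n : ℕ, ∃ z, P z ∧ tau S z = n := ⟨tau S w, w, hPw, rfl⟩
  obtain ⟨z, hz, hzn⟩ := Nat.find_spec hQ
  refine ⟨z, hz.1, hz.2.1, hz.2.2, ?_⟩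
  intro v hv hwv hvu
  have hPv : P v := ⟨hv, hwv, hvu⟩
  obtain ⟨c, hPc, x, hx, hzc, y, hy, hvc⟩ := meet z v hz hPv
  by_cases hx1 : x = 1
  · rw [hx1, one_mul] at hzc
    exact ⟨y, hy, by rw [hvc, hzc]⟩
  · exfalso
    have hlt : tau S c < Nat.find hQ := by
      rw [← hzn, hzc]; exact tau_lt c x hPc.1 hx hx1
    exact Nat.find_min hQ hlt ⟨c, hPc, rfl⟩
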